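/- arXiv:1311.4822 — 2 statements merged into one kernel-verified Lean document; each statement's English description precedes it below -/
import Mathlib

section
/- The net reproductive number is bounded above by the alternative net reproductive number: R₀ ≤ R̂₀. -/
open Matrix BigOperators

noncomputable def specRad {ι : Type*} [Fintype ι] [DecidableEq ι]
    (M : Matrix ι ι ℝ) : ℝ :=
  sSup {r : ℝ | ∃ μ : ℂ, μ ∈ spectrum ℂ (M.map Complex.ofReal) ∧ r = ‖μ‖}

noncomputable def colNorm {ι : Type*} [Fintype ι] (M : Matrix ι ι ℝ) : ℝ :=
  ⨆ q, ∑ p, |M p q|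

def localF (m : ℕ) (f : Fin m → ℝ) : Matrix (Fin m) (Fin m) ℝ :=
  Matrix.of fun k' k => if (k' : ℕ) = 0 then f k else 0

def localS (m : ℕ) (sd ss : Fin m → ℝ) : Matrix (Fin m) (Fin m) ℝ :=
  Matrix.of fun k' k =>
    if k' = k then sd k else if (k' : ℕ) = (k : ℕ) + 1 then ss k else 0

def fecMat (m n : ℕ) (f : Fin m → Fin n → ℝ) :
    Matrix (Fin m × Fin n) (Fin m × Fin n) ℝ :=
  Matrix.of fun p q =>
    if p.2 = q.2 then localF m (fun k => f k q.2) p.1 q.1 else 0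

def survMat (m n : ℕ) (sd ss : Fin m → Fin n → ℝ) :
    Matrix (Fin m × Fin n) (Fin m × Fin n) ℝ :=
  Matrix.of fun p q =>
    if p.2 = q.2 then localS m (fun k => sd k q.2) (fun k => ss k q.2) p.1 q.1 else 0

def dispMat (m n : ℕ) (d : Fin m → Fin n → Fin n → ℝ) :
    Matrix (Fin m × Fin n) (Fin m × Fin n) ℝ :=
  Matrix.of fun p q => if p.1 = q.1 then d q.1 p.2 q.2 else 0

noncomputable def nextGen (m n : ℕ) (f : Fin m → Fin n → ℝ)
    (sd ss : Fin m → Fin n → ℝ) (d : Fin m → Fin n → Fin n → ℝ) :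
    Matrix (Fin m × Fin n) (Fin m × Fin n) ℝ :=
  dispMat m n d * fecMat m n f * (1 - dispMat m n d * survMat m n sd ss)⁻¹

noncomputable def partGen (m n : ℕ) (f : Fin m → Fin n → ℝ)
    (sd ss : Fin m → Fin n → ℝ) (d : Fin m → Fin n → Fin n → ℝ) :
    Matrix (Fin m × Fin n) (Fin m × Fin n) ℝ :=
  fecMat m n f * (1 - dispMat m n d * survMat m n sd ss)⁻¹

def newbornSub {m n : ℕ} (hm : 0 < m)
    (B : Matrix (Fin m × Fin n) (Fin m × Fin n) ℝ) : Matrix (Fin n) (Fin n) ℝ :=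
  Matrix.of fun i j => B (⟨0, hm⟩, i) (⟨0, hm⟩, j)

noncomputable def altR0 (m n : ℕ)
    (N : Matrix (Fin m × Fin n) (Fin m × Fin n) ℝ) : ℝ :=
  sSup {r : ℝ | ∃ x : Fin m × Fin n → ℝ, (∀ p, 0 ≤ x p) ∧ (∑ p, |x p|) = 1 ∧
    (∀ p : Fin m × Fin n, (p.1 : ℕ) ≠ 0 → x p = 0) ∧ r = ∑ p, |N.mulVec x p|}

/-- N has zero rows at non-newborn indices. -/
lemma nextGen_row_zero (m n : ℕ) (f : Fin m → Fin n → ℝ)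
    (sd ss : Fin m → Fin n → ℝ) (d : Fin m → Fin n → Fin n → ℝ)
    (p q : Fin m × Fin n) (hp : (p.1 : ℕ) ≠ 0) :
    nextGen m n f sd ss d p q = 0 := by
  have hDF : ∀ r, (dispMat m n d * fecMat m n f) p r = 0 := by
    intro r
    rw [Matrix.mul_apply]
    refine Finset.sum_eq_zero fun s _ => ?_
    by_cases hps : p.1 = s.1
    · have : fecMat m n f s r = 0 := by
        simp only [fecMat, localF, Matrix.of_apply]
        have : (s.1 : ℕ) ≠ 0 := by rw [← hps]; exact hp
        simp [this]
      rw [this, mul_zero]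
    · simp [dispMat, hps]
  rw [nextGen, Matrix.mul_apply]
  exact Finset.sum_eq_zero fun s _ => by rw [hDF s, zero_mul]

theorem stmt6
    (m n : ℕ) (hm : 2 ≤ m) (hn : 1 ≤ n)
    (f : Fin m → Fin n → ℝ) (hf : ∀ k i, 0 ≤ f k i)
    (sd ss : Fin m → Fin n → ℝ)
    (hsd : ∀ k i, 0 ≤ sd k i) (hss : ∀ k i, 0 ≤ ss k i)
    (hs1 : ∀ (k : Fin m) (i : Fin n),
      sd k i + (if (k : ℕ) + 1 < m then ss k i else 0) < 1)
    (d : Fin m → Fin n → Fin n → ℝ)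
    (hd0 : ∀ k i j, 0 ≤ d k i j) (hd1 : ∀ k i j, d k i j ≤ 1)
    (hdsum : ∀ k j, ∑ i, d k i j = 1) :
    specRad (nextGen m n f sd ss d) ≤ altR0 m n (nextGen m n f sd ss d) := by
  set N := nextGen m n f sd ss d with hN
  have hm0 : 0 < m := by omega
  set z0 : Fin m := ⟨0, hm0⟩ with hz0
  -- column sums at newborn columns
  set c : Fin n → ℝ := fun j => ∑ p, |N p (z0, j)| with hc
  -- the altR0 defining set, membership of column sums
  set altSet : Set ℝ := {r : ℝ | ∃ x : Fin m × Fin n → ℝ, (∀ p, 0 ≤ x p) ∧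
      (∑ p, |x p|) = 1 ∧ (∀ p : Fin m × Fin n, (p.1 : ℕ) ≠ 0 → x p = 0) ∧
      r = ∑ p, |N.mulVec x p|} with haltSet
  have hmem : ∀ j : Fin n, c j ∈ altSet := by
    intro j
    refine ⟨fun q => if q = (z0, j) then 1 else 0, fun p => by positivity, ?_, ?_, ?_⟩
    · rw [Finset.sum_eq_single (z0, j)]
      · simp
      · intro b _ hb; simp [hb]
      · simp
    · intro p hp
      have : p ≠ (z0, j) := by
        intro h; rw [h] at hp; exact hp rfl
      simp [this]
    · refine Finset.sum_congr rfl fun p _ => ?_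
      congr 1
      rw [Matrix.mulVec, dotProduct]
      rw [Finset.sum_eq_single (z0, j)]
      · simp
      · intro b _ hb; simp [hb]
      · simp
  have hbdd : BddAbove altSet := by
    refine ⟨∑ p, ∑ q, |N p q|, fun r hr => ?_⟩
    obtain ⟨x, hx0, hx1, _, hrx⟩ := hr
    rw [hrx]
    refine Finset.sum_le_sum fun p _ => ?_
    calc |N.mulVec x p| ≤ ∑ q, |N p q * x q| := Finset.abs_sum_le_sum_abs _ _
      _ ≤ ∑ q, |N p q| := by
          refine Finset.sum_le_sum fun q _ => ?_
          rw [abs_mul]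
          have hxq : |x q| ≤ 1 := by
            rw [← hx1]
            exact Finset.single_le_sum (fun i _ => abs_nonneg (x i)) (Finset.mem_univ q)
          nlinarith [abs_nonneg (N p q), abs_nonneg (x q)]
  have hcle : ∀ j, c j ≤ altR0 m n N := fun j => le_csSup hbdd (hmem j)
  -- pick the maximal column sum
  have : Nonempty (Fin n) := ⟨⟨0, by omega⟩⟩
  obtain ⟨j₀, -, hj₀⟩ := Finset.exists_max_image Finset.univ c Finset.univ_nonempty
  have hc0 : 0 ≤ c j₀ := Finset.sum_nonneg fun p _ => abs_nonneg _
  have halt0 : 0 ≤ altR0 m n N := le_trans hc0 (hcle j₀)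
  refine Real.sSup_le ?_ halt0
  rintro r ⟨μ, hμspec, rfl⟩
  by_cases hμ : μ = 0
  · simpa [hμ] using halt0
  -- extract eigenvector
  set M : Matrix (Fin m × Fin n) (Fin m × Fin n) ℂ := N.map Complex.ofReal with hM
  have hev : ∃ v ≠ 0, M.mulVec v = μ • v := by
    rw [spectrum.mem_iff, Matrix.isUnit_iff_isUnit_det, isUnit_iff_ne_zero, not_not] at hμspec
    obtain ⟨v, hv, hmv⟩ := Matrix.exists_mulVec_eq_zero_iff.mpr hμspec
    refine ⟨v, hv, ?_⟩
    rw [Matrix.sub_mulVec] at hmv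
    have halg : (algebraMap ℂ (Matrix (Fin m × Fin n) (Fin m × Fin n) ℂ) μ).mulVec v
        = μ • v := by
      rw [Matrix.algebraMap_eq_diagonal]
      ext i
      simp [Matrix.mulVec_diagonal]
    rw [halg] at hmv
    exact (sub_eq_zero.mp hmv).symm
  obtain ⟨v, hv, hmv⟩ := hev
  -- v is supported on newborn indices
  have hsupp : ∀ q : Fin m × Fin n, (q.1 : ℕ) ≠ 0 → v q = 0 := by
    intro q hq
    have hrow : M.mulVec v q = 0 := by
      rw [Matrix.mulVec, dotProduct]
      refine Finset.sum_eq_zero fun s _ => ?_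
      have : N q s = 0 := nextGen_row_zero m n f sd ss d q s hq
      simp [hM, this]
    have := congrFun hmv q
    rw [hrow] at this
    have := this.symm
    rcases mul_eq_zero.mp this with h | h
    · exact absurd h hμ
    · exact h
  -- L¹ norm of v
  set S : ℝ := ∑ q, ‖v q‖ with hS
  have hSpos : 0 < S := by
    have hne : ∃ q, v q ≠ 0 := by
      by_contra h
      push_neg at h
      exact hv (funext h)
    obtain ⟨q, hq⟩ := hne
    have : 0 < ‖v q‖ := by
      simpa [norm_pos_iff] using hq
    refine lt_of_lt_of_le this ?_
    exact Finset.single_le_sum (f := fun i => ‖v i‖)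
      (fun i _ => norm_nonneg _) (Finset.mem_univ q)
  -- key estimate
  have hkey : ‖μ‖ * S ≤ c j₀ * S := by
    have hls : ‖μ‖ * S = ∑ q, ‖M.mulVec v q‖ := by
      rw [hS, Finset.mul_sum]
      refine Finset.sum_congr rfl fun q _ => ?_
      rw [congrFun hmv q, Pi.smul_apply, smul_eq_mul, norm_mul]
    rw [hls]
    have h1 : ∀ q, ‖M.mulVec v q‖ ≤ ∑ s, |N q s| * ‖v s‖ := by
      intro q
      rw [Matrix.mulVec, dotProduct]
      refine le_trans (norm_sum_le _ _) ?_
      refine le_of_eq (Finset.sum_congr rfl fun s _ => ?_)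
      rw [norm_mul]
      congr 1
      simp [hM]
    calc ∑ q, ‖M.mulVec v q‖
        ≤ ∑ q, ∑ s, |N q s| * ‖v s‖ := Finset.sum_le_sum fun q _ => h1 q
      _ = ∑ s, ‖v s‖ * (∑ q, |N q s|) := by
          rw [Finset.sum_comm]
          refine Finset.sum_congr rfl fun s _ => ?_
          rw [Finset.mul_sum]
          exact Finset.sum_congr rfl fun q _ => mul_comm _ _
      _ ≤ ∑ s, ‖v s‖ * c j₀ := by
          refine Finset.sum_le_sum fun s _ => ?_
          by_cases hs : (s.1 : ℕ) = 0
          · have hseq : s = (z0, s.2) := by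
              ext
              · exact hs
              · rfl
            have : (∑ q, |N q s|) = c s.2 := by
              rw [hc]
              exact Finset.sum_congr rfl fun q _ => by rw [hseq]
            rw [this]
            exact mul_le_mul_of_nonneg_left (hj₀ s.2 (Finset.mem_univ s.2))
              (norm_nonneg _)
          · rw [hsupp s hs]
            simp
      _ = c j₀ * S := by rw [hS, Finset.mul_sum]; exact Finset.sum_congr rfl fun s _ => by ring
  have : ‖μ‖ ≤ c j₀ := le_of_mul_le_mul_right (by linarith [hkey]) hSpos
  exact le_trans this (hcle j₀)
end

section
/- Suppose the dispersion and survival matrices satisfy D S = S, and set α := min_{i ∈ {1,…,n}} R₀^i and β := max_{i ∈ {1,…,n}} R₀^i, where R₀^i := (N^i)_{11} with N^i := F^i (I − S^i)^{-1}. Then the net reproductive number satisfies α ≤ R₀ ≤ β. Moreover, R₀ depends monotonically on the local net reproductive numbers: if D̄ is the n×n matrix with D̄_{ij} = d_1^{i,j} and R, R' ∈ ℝ^n are nonnegative vectors with R_j ≤ R'_j for all j, then ρ(D̄ · diag(R₁,…,Rₙ)) ≤ ρ(D̄ · diag(R'₁,…,R'ₙ)). -/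
open Matrix BigOperators

section SpecHelpers
open Filter Topology

attribute [local instance] Matrix.linftyOpNormedRing Matrix.linftyOpNormedAlgebra
  Matrix.linftyOpNormedAddCommGroup

noncomputable local instance matCSC {m n : Type*} [Fintype n] : CompleteSpace (Matrix m n ℂ) :=
  inferInstanceAs (CompleteSpace (m → n → ℂ))

noncomputable local instance matCSR {m n : Type*} [Fintype n] : CompleteSpace (Matrix m n ℝ) :=
  inferInstanceAs (CompleteSpace (m → n → ℝ))

variable {ι κ τ : Type*} [Fintype ι] [DecidableEq ι] [Fintype κ] [DecidableEq κ]
  [Fintype τ] [DecidableEq τ]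

noncomputable def aCmap {ι κ : Type*} (M : Matrix ι κ ℝ) : Matrix ι κ ℂ :=
  M.map Complex.ofReal

lemma aCmap_mul (A : Matrix ι κ ℝ) (B : Matrix κ τ ℝ) :
    aCmap (A * B) = aCmap A * aCmap B :=
  Matrix.map_mul (f := Complex.ofRealHom)

lemma aCmap_one : aCmap (1 : Matrix ι ι ℝ) = 1 :=
  Matrix.map_one _ Complex.ofRealHom.map_zero Complex.ofRealHom.map_one

lemma aCmap_pow (A : Matrix ι ι ℝ) (k : ℕ) : aCmap (A ^ k) = aCmap A ^ k := by
  induction k with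
  | zero => simpa using aCmap_one
  | succ k ih => rw [pow_succ, pow_succ, aCmap_mul, ih]

lemma aCmap_transpose (A : Matrix ι κ ℝ) : aCmap Aᵀ = (aCmap A)ᵀ :=
  Matrix.transpose_map

lemma specRad_def' (M : Matrix ι ι ℝ) :
    specRad M = sSup {r : ℝ | ∃ μ : ℂ, μ ∈ spectrum ℂ (aCmap M) ∧ r = ‖μ‖} := rfl

lemma specSet_nonempty [Nonempty ι] (M : Matrix ι ι ℝ) :
    {r : ℝ | ∃ μ : ℂ, μ ∈ spectrum ℂ (aCmap M) ∧ r = ‖μ‖}.Nonempty := by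
  obtain ⟨μ, hμ⟩ := spectrum.nonempty (aCmap M)
  exact ⟨‖μ‖, μ, hμ, rfl⟩

lemma specSet_bddAbove [Nonempty ι] (M : Matrix ι ι ℝ) :
    BddAbove {r : ℝ | ∃ μ : ℂ, μ ∈ spectrum ℂ (aCmap M) ∧ r = ‖μ‖} := by
  refine ⟨‖aCmap M‖, ?_⟩
  rintro r ⟨μ, hμ, rfl⟩
  exact spectrum.norm_le_norm_of_mem hμ

lemma le_specRad [Nonempty ι] {M : Matrix ι ι ℝ} {μ : ℂ}
    (h : μ ∈ spectrum ℂ (aCmap M)) : ‖μ‖ ≤ specRad M :=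
  le_csSup (specSet_bddAbove M) ⟨μ, h, rfl⟩

lemma specRad_le [Nonempty ι] {M : Matrix ι ι ℝ} {c : ℝ}
    (h : ∀ μ ∈ spectrum ℂ (aCmap M), ‖μ‖ ≤ c) : specRad M ≤ c :=
  csSup_le (specSet_nonempty M) (by rintro r ⟨μ, hμ, rfl⟩; exact h μ hμ)

lemma specRad_nonneg [Nonempty ι] (M : Matrix ι ι ℝ) : 0 ≤ specRad M := by
  obtain ⟨μ, hμ⟩ := spectrum.nonempty (aCmap M)
  exact le_trans (norm_nonneg μ) (le_specRad hμ)

lemma specRad_eq_toReal [Nonempty ι] (M : Matrix ι ι ℝ) :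
    specRad M = (spectralRadius ℂ (aCmap M)).toReal := by
  obtain ⟨μ₀, hμ₀, hr⟩ := spectrum.exists_nnnorm_eq_spectralRadius (aCmap M)
  refine le_antisymm ?_ ?_
  · refine specRad_le fun μ hμ => ?_
    have h1 : (‖μ‖₊ : ENNReal) ≤ spectralRadius ℂ (aCmap M) :=
      le_iSup₂ (f := fun (k : ℂ) (_ : k ∈ spectrum ℂ (aCmap M)) => (‖k‖₊ : ENNReal)) μ hμ
    rw [← hr] at h1
    have := ENNReal.coe_le_coe.mp h1
    rw [← hr]
    simpa [ENNReal.coe_toReal] using NNReal.coe_le_coe.mpr this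
  · rw [← hr, ENNReal.coe_toReal, coe_nnnorm]
    exact le_specRad hμ₀
lemma nnnorm_aCmap (M : Matrix ι κ ℝ) :
    ‖aCmap M‖₊ = Finset.univ.sup fun i => ∑ j, ‖M i j‖₊ := by
  rw [Matrix.linfty_opNNNorm_def]
  congr 1
  funext i
  refine Finset.sum_congr rfl fun j _ => ?_
  exact Complex.nnnorm_real _

lemma rowsum_le_norm_aCmap {M : Matrix ι κ ℝ} (h0 : ∀ i j, 0 ≤ M i j) (i : ι) :
    ∑ j, M i j ≤ ‖aCmap M‖ := by
  rw [← coe_nnnorm, nnnorm_aCmap]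
  calc ∑ j, M i j = ((∑ j, ‖M i j‖₊ : NNReal) : ℝ) := by
        push_cast
        refine Finset.sum_congr rfl fun j _ => ?_
        exact (Real.norm_of_nonneg (h0 i j)).symm
    _ ≤ _ := by
        exact_mod_cast NNReal.coe_le_coe.mpr
          (Finset.le_sup (f := fun i => ∑ j, ‖M i j‖₊) (Finset.mem_univ i))

lemma norm_aCmap_le {M : Matrix ι κ ℝ} {β : ℝ} (hβ0 : 0 ≤ β) (h0 : ∀ i j, 0 ≤ M i j)
    (hβ : ∀ i, ∑ j, M i j ≤ β) : ‖aCmap M‖ ≤ β := by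
  rw [← coe_nnnorm, nnnorm_aCmap]
  have h1 : (Finset.univ.sup fun i => ∑ j, ‖M i j‖₊) ≤ β.toNNReal := by
    refine Finset.sup_le fun i _ => ?_
    rw [← NNReal.coe_le_coe, Real.coe_toNNReal β hβ0]
    calc ((∑ j, ‖M i j‖₊ : NNReal) : ℝ) = ∑ j, M i j := by
          push_cast
          refine Finset.sum_congr rfl fun j _ => ?_
          exact Real.norm_of_nonneg (h0 i j)
      _ ≤ β := hβ i
  calc ((Finset.univ.sup fun i => ∑ j, ‖M i j‖₊ : NNReal) : ℝ)
      ≤ (β.toNNReal : ℝ) := NNReal.coe_le_coe.mpr h1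
    _ = β := Real.coe_toNNReal β hβ0

lemma entry_mul_nonneg {A : Matrix ι κ ℝ} {B : Matrix κ τ ℝ}
    (hA : ∀ i j, 0 ≤ A i j) (hB : ∀ i j, 0 ≤ B i j) : ∀ i j, 0 ≤ (A * B) i j := by
  intro i j
  rw [Matrix.mul_apply]
  exact Finset.sum_nonneg fun r _ => mul_nonneg (hA i r) (hB r j)

lemma entry_pow_nonneg {A : Matrix ι ι ℝ} (hA : ∀ i j, 0 ≤ A i j) (k : ℕ) :
    ∀ i j, 0 ≤ (A ^ k) i j := by
  induction k with
  | zero => intro i j; rw [pow_zero]; by_cases h : i = j <;> simp [Matrix.one_apply, h]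
  | succ k ih => rw [pow_succ]; exact entry_mul_nonneg ih hA

lemma entry_mul_le {A A' : Matrix ι κ ℝ} {B B' : Matrix κ τ ℝ}
    (hA : ∀ i j, 0 ≤ A i j) (hB : ∀ i j, 0 ≤ B i j)
    (hAA : ∀ i j, A i j ≤ A' i j) (hBB : ∀ i j, B i j ≤ B' i j) :
    ∀ i j, (A * B) i j ≤ (A' * B') i j := by
  intro i j
  rw [Matrix.mul_apply, Matrix.mul_apply]
  refine Finset.sum_le_sum fun r _ => ?_
  exact mul_le_mul (hAA i r) (hBB r j) (hB r j) (le_trans (hA i r) (hAA i r))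

lemma entry_pow_le {A B : Matrix ι ι ℝ} (hA : ∀ i j, 0 ≤ A i j)
    (hAB : ∀ i j, A i j ≤ B i j) (k : ℕ) : ∀ i j, (A ^ k) i j ≤ (B ^ k) i j := by
  induction k with
  | zero => intro i j; rw [pow_zero, pow_zero]
  | succ k ih => rw [pow_succ, pow_succ]; exact entry_mul_le (entry_pow_nonneg hA k) hA ih hAB

lemma rowsum_pow_ge {M : Matrix ι ι ℝ} {α : ℝ} (h0 : ∀ i j, 0 ≤ M i j) (hα : 0 ≤ α)
    (hrow : ∀ i, α ≤ ∑ j, M i j) (k : ℕ) : ∀ i, α ^ k ≤ ∑ j, (M ^ k) i j := by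
  induction k with
  | zero => intro i; simp [Matrix.one_apply]
  | succ k ih =>
    intro i
    have hM : (M ^ (k + 1) : Matrix ι ι ℝ) = M * M ^ k := by rw [pow_succ']
    have h2 : ∑ j, (M * M ^ k) i j = ∑ r, M i r * ∑ j, (M ^ k) r j := by
      simp_rw [Matrix.mul_apply, Finset.mul_sum]
      exact Finset.sum_comm
    rw [hM, h2, pow_succ']
    calc α * α ^ k ≤ (∑ r, M i r) * α ^ k :=
          mul_le_mul_of_nonneg_right (hrow i) (pow_nonneg hα k)
      _ = ∑ r, M i r * α ^ k := by rw [Finset.sum_mul]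
      _ ≤ ∑ r, M i r * ∑ j, (M ^ k) r j :=
          Finset.sum_le_sum fun r _ => mul_le_mul_of_nonneg_left (ih r) (h0 i r)

lemma specRad_le_of_rowsum [Nonempty ι] {M : Matrix ι ι ℝ} {β : ℝ} (hβ0 : 0 ≤ β)
    (h0 : ∀ i j, 0 ≤ M i j) (hβ : ∀ i, ∑ j, M i j ≤ β) : specRad M ≤ β := by
  refine specRad_le fun μ hμ => ?_
  exact le_trans (spectrum.norm_le_norm_of_mem hμ) (norm_aCmap_le hβ0 h0 hβ)

lemma le_specRad_of_rowsum [Nonempty ι] {M : Matrix ι ι ℝ} {α : ℝ} (hα : 0 ≤ α)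
    (h0 : ∀ i j, 0 ≤ M i j) (hrow : ∀ i, α ≤ ∑ j, M i j) : α ≤ specRad M := by
  rw [specRad_eq_toReal]
  have hne : spectralRadius ℂ (aCmap M) ≠ ⊤ :=
    ne_top_of_le_ne_top ENNReal.coe_ne_top (spectrum.spectralRadius_le_nnnorm (𝕜 := ℂ) _)
  have htd : Filter.Tendsto (fun k : ℕ => (‖aCmap M ^ k‖₊ : ENNReal) ^ (1 / k : ℝ))
      Filter.atTop (nhds (spectralRadius ℂ (aCmap M))) :=
    spectrum.pow_nnnorm_pow_one_div_tendsto_nhds_spectralRadius (aCmap M)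
  have hge : ENNReal.ofReal α ≤ spectralRadius ℂ (aCmap M) := by
    refine ge_of_tendsto htd ?_
    filter_upwards [Filter.eventually_ge_atTop 1] with k hk
    have h1 : α ^ k ≤ ((‖aCmap M ^ k‖₊ : ℝ)) := by
      rw [← aCmap_pow, coe_nnnorm]
      exact le_trans (rowsum_pow_ge h0 hα hrow k (Classical.arbitrary ι))
        (rowsum_le_norm_aCmap (entry_pow_nonneg h0 k) (Classical.arbitrary ι))
    have h2 : ENNReal.ofReal (α ^ k) ≤ (‖aCmap M ^ k‖₊ : ENNReal) := by
      rw [← ENNReal.ofReal_coe_nnreal]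
      exact ENNReal.ofReal_le_ofReal h1
    have h3 : (ENNReal.ofReal α) ^ k ≤ (‖aCmap M ^ k‖₊ : ENNReal) := by
      rwa [ENNReal.ofReal_pow hα] at h2
    have hkne : (k : ℝ) ≠ 0 := Nat.cast_ne_zero.mpr (by omega)
    calc ENNReal.ofReal α = ((ENNReal.ofReal α) ^ k) ^ (1 / (k : ℝ)) := by
          rw [← ENNReal.rpow_natCast, ← ENNReal.rpow_mul, mul_one_div_cancel hkne,
            ENNReal.rpow_one]
      _ ≤ (‖aCmap M ^ k‖₊ : ENNReal) ^ (1 / (k : ℝ)) :=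
          ENNReal.rpow_le_rpow h3 (by positivity)
  have := ENNReal.toReal_mono hne hge
  rwa [ENNReal.toReal_ofReal hα] at this

lemma specRad_mono [Nonempty ι] {A B : Matrix ι ι ℝ} (hA : ∀ i j, 0 ≤ A i j)
    (hAB : ∀ i j, A i j ≤ B i j) : specRad A ≤ specRad B := by
  rw [specRad_eq_toReal, specRad_eq_toReal]
  have hneB : spectralRadius ℂ (aCmap B) ≠ ⊤ :=
    ne_top_of_le_ne_top ENNReal.coe_ne_top (spectrum.spectralRadius_le_nnnorm (𝕜 := ℂ) _)
  refine ENNReal.toReal_mono hneB ?_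
  have htd : Filter.Tendsto (fun k : ℕ => (‖aCmap B ^ k‖₊ : ENNReal) ^ (1 / k : ℝ))
      Filter.atTop (nhds (spectralRadius ℂ (aCmap B))) :=
    spectrum.pow_nnnorm_pow_one_div_tendsto_nhds_spectralRadius (aCmap B)
  refine ge_of_tendsto htd ?_
  filter_upwards [Filter.eventually_ge_atTop 1] with k hk
  obtain ⟨k', rfl⟩ : ∃ k', k = k' + 1 := ⟨k - 1, by omega⟩
  have hnorm : ‖aCmap A ^ (k' + 1)‖₊ ≤ ‖aCmap B ^ (k' + 1)‖₊ := by
    rw [← aCmap_pow, ← aCmap_pow, nnnorm_aCmap, nnnorm_aCmap]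
    refine Finset.sup_mono_fun fun i _ => Finset.sum_le_sum fun j _ => ?_
    have h1 : 0 ≤ (A ^ (k' + 1)) i j := entry_pow_nonneg hA _ i j
    have h2 : (A ^ (k' + 1)) i j ≤ (B ^ (k' + 1)) i j := entry_pow_le hA hAB _ i j
    rw [← NNReal.coe_le_coe, coe_nnnorm, coe_nnnorm, Real.norm_of_nonneg h1,
      Real.norm_of_nonneg (le_trans h1 h2)]
    exact h2
  calc spectralRadius ℂ (aCmap A)
      ≤ (‖aCmap A ^ (k' + 1)‖₊ : ENNReal) ^ (1 / (k' + 1) : ℝ) *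
        (‖(1 : Matrix ι ι ℂ)‖₊ : ENNReal) ^ (1 / (k' + 1) : ℝ) :=
        spectrum.spectralRadius_le_pow_nnnorm_pow_one_div ℂ (aCmap A) k'
    _ = (‖aCmap A ^ (k' + 1)‖₊ : ENNReal) ^ (1 / (k' + 1) : ℝ) := by
        rw [nnnorm_one, ENNReal.coe_one, ENNReal.one_rpow, mul_one]
    _ ≤ (‖aCmap B ^ (k' + 1)‖₊ : ENNReal) ^ (1 / (k' + 1) : ℝ) :=
        ENNReal.rpow_le_rpow (ENNReal.coe_le_coe.mpr hnorm) (by positivity)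
    _ = (‖aCmap B ^ (k' + 1)‖₊ : ENNReal) ^ (1 / ((k' + 1 : ℕ)) : ℝ) := by
        norm_num
lemma mem_spec_iff (M : Matrix ι ι ℂ) (μ : ℂ) :
    μ ∈ spectrum ℂ M ↔ ∃ v, v ≠ 0 ∧ M.mulVec v = μ • v := by
  rw [spectrum.mem_iff]
  have h1 : (algebraMap ℂ (Matrix ι ι ℂ)) μ - M = μ • (1 : Matrix ι ι ℂ) - M := by
    rw [Algebra.algebraMap_eq_smul_one]
  rw [h1, Matrix.isUnit_iff_isUnit_det, isUnit_iff_ne_zero, not_not,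
    ← Matrix.exists_mulVec_eq_zero_iff]
  constructor
  · rintro ⟨v, hv, h⟩
    refine ⟨v, hv, ?_⟩
    rw [Matrix.sub_mulVec, Matrix.smul_mulVec, Matrix.one_mulVec, sub_eq_zero] at h
    exact h.symm
  · rintro ⟨v, hv, h⟩
    refine ⟨v, hv, ?_⟩
    rw [Matrix.sub_mulVec, Matrix.smul_mulVec, Matrix.one_mulVec, sub_eq_zero, h]

lemma spec_swap_aux (A : Matrix ι κ ℂ) (B : Matrix κ ι ℂ) {μ : ℂ} (hμ : μ ≠ 0)
    (h : μ ∈ spectrum ℂ (A * B)) : μ ∈ spectrum ℂ (B * A) := by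
  rw [mem_spec_iff] at h ⊢
  obtain ⟨v, hv, hMv⟩ := h
  refine ⟨B.mulVec v, ?_, ?_⟩
  · intro h0
    apply hv
    have h2 : A.mulVec (B.mulVec v) = μ • v := by rwa [Matrix.mulVec_mulVec]
    rw [h0, Matrix.mulVec_zero] at h2
    rcases smul_eq_zero.mp h2.symm with h | h
    · exact absurd h hμ
    · exact absurd h hv
  · rw [Matrix.mulVec_mulVec, Matrix.mul_assoc, ← Matrix.mulVec_mulVec, hMv,
      Matrix.mulVec_smul]

lemma spec_transpose (M : Matrix ι ι ℂ) : spectrum ℂ Mᵀ = spectrum ℂ M := by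
  ext μ
  rw [spectrum.mem_iff, spectrum.mem_iff, Matrix.isUnit_iff_isUnit_det,
    Matrix.isUnit_iff_isUnit_det]
  have h : (algebraMap ℂ (Matrix ι ι ℂ)) μ - Mᵀ = ((algebraMap ℂ (Matrix ι ι ℂ)) μ - M)ᵀ := by
    rw [Matrix.transpose_sub]
    congr 1
    simp [Matrix.algebraMap_eq_diagonal]
  rw [h, Matrix.det_transpose]

lemma specRad_transpose (M : Matrix ι ι ℝ) : specRad Mᵀ = specRad M := by
  unfold specRad
  have h : (Mᵀ.map Complex.ofReal) = (M.map Complex.ofReal)ᵀ := Matrix.transpose_map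
  rw [h, spec_transpose]

lemma specRad_eq_of_union [Nonempty ι] [Nonempty κ] {M : Matrix ι ι ℝ} {K : Matrix κ κ ℝ}
    (h : spectrum ℂ (aCmap M) = spectrum ℂ (aCmap K) ∪ {0}) : specRad M = specRad K := by
  refine le_antisymm ?_ ?_
  · refine specRad_le fun μ hμ => ?_
    rw [h] at hμ
    rcases hμ with hμ | hμ
    · exact le_specRad hμ
    · rw [Set.mem_singleton_iff.mp hμ]
      simpa using specRad_nonneg K
  · refine specRad_le fun μ hμ => ?_
    exact le_specRad (M := M) (by rw [h]; exact Set.mem_union_left _ hμ)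

lemma norm_lt_one {M : Matrix ι κ ℝ} (h : ∀ i, ∑ j, |M i j| < 1) : ‖M‖ < 1 := by
  rw [← coe_nnnorm, Matrix.linfty_opNNNorm_def]
  have h1 : (Finset.univ.sup fun i => ∑ j, ‖M i j‖₊) < 1 := by
    refine Finset.sup_lt_iff (by norm_num) |>.mpr fun i _ => ?_
    rw [← NNReal.coe_lt_coe]
    push_cast
    simpa [Real.norm_eq_abs] using h i
  exact_mod_cast NNReal.coe_lt_coe.mpr h1

lemma entry_le_norm (M : Matrix ι κ ℝ) (i : ι) (j : κ) : ‖M i j‖ ≤ ‖M‖ := by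
  have h1 : ‖M i j‖₊ ≤ ‖M‖₊ := by
    rw [Matrix.linfty_opNNNorm_def]
    exact le_trans
      (Finset.single_le_sum (f := fun j => ‖M i j‖₊) (fun _ _ => zero_le) (Finset.mem_univ j))
      (Finset.le_sup (f := fun i => ∑ j, ‖M i j‖₊) (Finset.mem_univ i))
  exact_mod_cast NNReal.coe_le_coe.mpr h1

lemma inv_one_sub_nonneg {M : Matrix ι ι ℝ} (h0 : ∀ i j, 0 ≤ M i j) (hn : ‖M‖ < 1) :
    ∃ G : Matrix ι ι ℝ, (1 - M) * G = 1 ∧ G * (1 - M) = 1 ∧ ∀ i j, 0 ≤ G i j := by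
  refine ⟨∑' k : ℕ, M ^ k, mul_neg_geom_series M hn, geom_series_mul_neg M hn, ?_⟩
  intro i j
  have hsum : Summable fun k : ℕ => M ^ k := summable_geometric_of_norm_lt_one hn
  let eL : Matrix ι ι ℝ →ₗ[ℝ] ℝ :=
    { toFun := fun N => N i j, map_add' := fun _ _ => rfl, map_smul' := fun _ _ => rfl }
  let e : Matrix ι ι ℝ →L[ℝ] ℝ :=
    eL.mkContinuous 1 (fun N => by rw [one_mul]; exact entry_le_norm N i j)
  have he : e (∑' k : ℕ, M ^ k) = ∑' k : ℕ, e (M ^ k) := e.map_tsum hsum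
  have he2 : (∑' k : ℕ, M ^ k) i j = ∑' k : ℕ, (M ^ k) i j := he
  rw [he2]
  exact tsum_nonneg fun k => entry_pow_nonneg h0 k i j
section Structural

lemma localS_colsum {m : ℕ} (sd ss : Fin m → ℝ) (k : Fin m)
    (hsd : 0 ≤ sd k) (hss : 0 ≤ ss k) :
    ∑ k', |localS m sd ss k' k| = sd k + (if (k : ℕ) + 1 < m then ss k else 0) := by
  have h1 : ∀ k' : Fin m, |localS m sd ss k' k| =
      (if k' = k then sd k else 0) + (if (k' : ℕ) = (k : ℕ) + 1 then ss k else 0) := by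
    intro k'
    rcases eq_or_ne k' k with h | h
    · subst h
      have h2 : ¬ ((k' : ℕ) = (k' : ℕ) + 1) := by omega
      simp [localS, h2, abs_of_nonneg hsd]
    · rcases eq_or_ne ((k' : ℕ)) ((k : ℕ) + 1) with h3 | h3
      · simp [localS, h, h3, abs_of_nonneg hss]
      · simp [localS, h, h3]
  rw [Finset.sum_congr rfl fun k' _ => h1 k', Finset.sum_add_distrib]
  congr 1
  · simp [Finset.sum_ite_eq']
  · by_cases h : (k : ℕ) + 1 < m
    · rw [if_pos h]
      rw [Finset.sum_eq_single (⟨(k : ℕ) + 1, h⟩ : Fin m)]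
      · simp
      · intro k' _ hk'
        refine if_neg fun hc => hk' ?_
        exact Fin.ext hc
      · simp
    · rw [if_neg h]
      exact Finset.sum_eq_zero fun k' _ => if_neg fun hc => h (by rw [← hc]; exact k'.isLt)

lemma survMat_eq_blockDiagonal {m n : ℕ} (sd ss : Fin m → Fin n → ℝ) :
    survMat m n sd ss =
      Matrix.blockDiagonal (fun i => localS m (fun k => sd k i) (fun k => ss k i)) := by
  ext p q
  rw [Matrix.blockDiagonal_apply]
  by_cases h : p.2 = q.2 <;> simp [survMat, h]

lemma fecMat_eq_blockDiagonal {m n : ℕ} (f : Fin m → Fin n → ℝ) :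
    fecMat m n f = Matrix.blockDiagonal (fun i => localF m (fun k => f k i)) := by
  ext p q
  rw [Matrix.blockDiagonal_apply]
  by_cases h : p.2 = q.2 <;> simp [fecMat, h]

lemma localF_mul_row_zero {m : ℕ} (g : Fin m → ℝ) (X : Matrix (Fin m) (Fin m) ℝ)
    {p1 : Fin m} (h : (p1 : ℕ) ≠ 0) (l : Fin m) : (localF m g * X) p1 l = 0 := by
  rw [Matrix.mul_apply]
  exact Finset.sum_eq_zero fun r _ => by simp [localF, h]

end Structural
theorem stmt12
    (m n : ℕ) (hm : 2 ≤ m) (hn : 1 ≤ n)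
    (f : Fin m → Fin n → ℝ) (hf : ∀ k i, 0 ≤ f k i)
    (sd ss : Fin m → Fin n → ℝ)
    (hsd : ∀ k i, 0 ≤ sd k i) (hss : ∀ k i, 0 ≤ ss k i)
    (hs1 : ∀ (k : Fin m) (i : Fin n),
      sd k i + (if (k : ℕ) + 1 < m then ss k i else 0) < 1)
    (d : Fin m → Fin n → Fin n → ℝ)
    (hd0 : ∀ k i j, 0 ≤ d k i j) (hd1 : ∀ k i j, d k i j ≤ 1)
    (hdsum : ∀ k j, ∑ i, d k i j = 1)
    (hDS : dispMat m n d * survMat m n sd ss = survMat m n sd ss) :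
    (⨅ i : Fin n,
        (localF m (fun k => f k i) *
          (1 - localS m (fun k => sd k i) (fun k => ss k i))⁻¹)
          ⟨0, show 0 < m by omega⟩ ⟨0, show 0 < m by omega⟩) ≤
        specRad (nextGen m n f sd ss d) ∧
      specRad (nextGen m n f sd ss d) ≤
        (⨆ i : Fin n,
          (localF m (fun k => f k i) *
            (1 - localS m (fun k => sd k i) (fun k => ss k i))⁻¹)
            ⟨0, show 0 < m by omega⟩ ⟨0, show 0 < m by omega⟩) ∧
      ∀ R R' : Fin n → ℝ, (∀ j, 0 ≤ R j) → (∀ j, 0 ≤ R' j) → (∀ j, R j ≤ R' j) →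
        specRad (newbornSub (show 0 < m by omega) (dispMat m n d) *
            Matrix.diagonal R) ≤
          specRad (newbornSub (show 0 < m by omega) (dispMat m n d) *
            Matrix.diagonal R') := by
  have hm0 : 0 < m := by omega
  have hm1 : 1 < m := by omega
  haveI : Nonempty (Fin n) := ⟨⟨0, by omega⟩⟩
  haveI : Nonempty (Fin m) := ⟨⟨0, hm0⟩⟩
  set z : Fin m := ⟨0, hm0⟩ with hz
  set Dbar : Matrix (Fin n) (Fin n) ℝ := newbornSub hm0 (dispMat m n d) with hDbar
  have hDbar_apply : ∀ j j', Dbar j j' = d z j j' := by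
    intro j j'
    simp [hDbar, newbornSub, dispMat, hz]
  -- Part 3 (monotonicity) first, as it is independent.
  have part3 : ∀ R R' : Fin n → ℝ, (∀ j, 0 ≤ R j) → (∀ j, 0 ≤ R' j) → (∀ j, R j ≤ R' j) →
      specRad (Dbar * Matrix.diagonal R) ≤ specRad (Dbar * Matrix.diagonal R') := by
    intro R R' hR hR' hRR'
    refine specRad_mono (fun i j => ?_) (fun i j => ?_)
    · rw [Matrix.mul_diagonal]
      exact mul_nonneg (hDbar_apply i j ▸ hd0 z i j) (hR j)
    · rw [Matrix.mul_diagonal, Matrix.mul_diagonal]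
      exact mul_le_mul_of_nonneg_left (hRR' j) (hDbar_apply i j ▸ hd0 z i j)
  -- local inverses
  have hloc : ∀ i : Fin n, ∃ Gi : Matrix (Fin m) (Fin m) ℝ,
      (1 - localS m (fun k => sd k i) (fun k => ss k i)) * Gi = 1 ∧
      Gi * (1 - localS m (fun k => sd k i) (fun k => ss k i)) = 1 ∧ ∀ k l, 0 ≤ Gi k l := by
    intro i
    set Sl : Matrix (Fin m) (Fin m) ℝ := localS m (fun k => sd k i) (fun k => ss k i) with hSl
    have hSl0 : ∀ k l, 0 ≤ Sl k l := by
      intro k l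
      simp only [hSl, localS, Matrix.of_apply]
      split_ifs <;> [exact hsd l i; exact hss l i; exact le_refl 0]
    have hST0 : ∀ k l, 0 ≤ Slᵀ k l := fun k l => hSl0 l k
    have hnorm : ‖Slᵀ‖ < 1 := by
      refine norm_lt_one fun k => ?_
      have h1 : ∑ j, |Slᵀ k j| = ∑ k', |Sl k' k| := rfl
      rw [h1, localS_colsum _ _ k (hsd k i) (hss k i)]
      exact hs1 k i
    obtain ⟨G0, hG1, hG2, hG0⟩ := inv_one_sub_nonneg hST0 hnorm
    refine ⟨G0ᵀ, ?_, ?_, fun k l => hG0 l k⟩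
    · have h := congrArg Matrix.transpose hG2
      simpa [Matrix.transpose_mul, Matrix.transpose_sub] using h
    · have h := congrArg Matrix.transpose hG1
      simpa [Matrix.transpose_mul, Matrix.transpose_sub] using h
  choose G hG1 hG2 hG0 using hloc
  have hInv : ∀ i, (1 - localS m (fun k => sd k i) (fun k => ss k i))⁻¹ = G i :=
    fun i => Matrix.inv_eq_right_inv (hG1 i)
  simp_rw [hInv]
  set R0 : Fin n → ℝ := fun i => (localF m (fun k => f k i) * G i) z z with hR0
  have hR0nn : ∀ i, 0 ≤ R0 i := by
    intro i
    show 0 ≤ (localF m (fun k => f k i) * G i) z z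
    rw [Matrix.mul_apply]
    refine Finset.sum_nonneg fun r _ => ?_
    have : localF m (fun k => f k i) z r = f r i := by simp [localF, hz]
    rw [this]
    exact mul_nonneg (hf r i) (hG0 i r z)
  set α : ℝ := ⨅ i, R0 i with hα
  set β : ℝ := ⨆ i, R0 i with hβ
  have hαle : ∀ j, α ≤ R0 j := fun j => ciInf_le (Finite.bddBelow_range _) j
  have hβge : ∀ j, R0 j ≤ β := fun j => le_ciSup (Finite.bddAbove_range _) j
  have hα0 : 0 ≤ α := le_ciInf hR0nn
  have hβ0 : 0 ≤ β := le_trans (hR0nn (Classical.arbitrary _)) (hβge _)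
  -- global structure
  have hGb : (1 - survMat m n sd ss)⁻¹ = Matrix.blockDiagonal G := by
    apply Matrix.inv_eq_right_inv
    rw [survMat_eq_blockDiagonal, ← Matrix.blockDiagonal_one, ← Matrix.blockDiagonal_sub,
      ← Matrix.blockDiagonal_mul]
    have h : (fun k => ((1 : Fin n → Matrix (Fin m) (Fin m) ℝ) -
        fun i => localS m (fun k => sd k i) (fun k => ss k i)) k * G k) =
        (1 : Fin n → Matrix (Fin m) (Fin m) ℝ) := funext fun i => hG1 i
    rw [h]
  have hNG : nextGen m n f sd ss d =
      dispMat m n d * Matrix.blockDiagonal (fun i => localF m (fun k => f k i) * G i) := by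
    unfold nextGen
    rw [hDS, hGb, fecMat_eq_blockDiagonal, Matrix.mul_assoc, ← Matrix.blockDiagonal_mul]
  set N0 : Fin n → Matrix (Fin m) (Fin m) ℝ := fun i => localF m (fun k => f k i) * G i
    with hN0
  have hN0row : ∀ (j : Fin n) (p1 : Fin m), (p1 : ℕ) ≠ 0 → ∀ l, N0 j p1 l = 0 :=
    fun j p1 h l => localF_mul_row_zero _ _ h l
  set A : Matrix (Fin m × Fin n) (Fin n) ℝ :=
    Matrix.of fun p j => if p.1 = z then d z p.2 j else 0 with hA
  set B : Matrix (Fin n) (Fin m × Fin n) ℝ :=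
    Matrix.of fun j q => if q.2 = j then N0 j z q.1 else 0 with hB
  have hNentry : ∀ p q, nextGen m n f sd ss d p q = d p.1 p.2 q.2 * N0 q.2 p.1 q.1 := by
    intro p q
    rw [hNG, Matrix.mul_apply, Fintype.sum_prod_type]
    have h1 : ∀ (r : Fin m) (t : Fin n),
        dispMat m n d p (r, t) * Matrix.blockDiagonal N0 (r, t) q =
          if p.1 = r then (if t = q.2 then d p.1 p.2 q.2 * N0 q.2 p.1 q.1 else 0) else 0 := by
      intro r t
      rw [Matrix.blockDiagonal_apply]
      show (if p.1 = r then d r p.2 t else 0) * (if t = q.2 then N0 t r q.1 else 0) = _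
      by_cases h1 : p.1 = r
      · by_cases h2 : t = q.2
        · subst h1; subst h2; simp
        · simp [h1, h2]
      · simp [h1]
    rw [Finset.sum_congr rfl fun r _ => Finset.sum_congr rfl fun t _ => h1 r t]
    simp
  have hABentry : ∀ p q, (A * B) p q =
      (if p.1 = z then d z p.2 q.2 * N0 q.2 z q.1 else 0) := by
    intro p q
    rw [Matrix.mul_apply]
    have h1 : ∀ j : Fin n, A p j * B j q =
        if j = q.2 then (if p.1 = z then d z p.2 q.2 * N0 q.2 z q.1 else 0) else 0 := by
      intro j
      show (if p.1 = z then d z p.2 j else 0) * (if q.2 = j then N0 j z q.1 else 0) = _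
      by_cases h2 : j = q.2
      · subst h2
        by_cases h1 : p.1 = z
        · simp [h1]
        · simp [h1]
      · have h3 : ¬ q.2 = j := fun hc => h2 hc.symm
        simp [h2, h3]
    rw [Finset.sum_congr rfl fun j _ => h1 j]
    simp
  have hABeq : nextGen m n f sd ss d = A * B := by
    ext p q
    rw [hNentry, hABentry]
    rcases eq_or_ne p.1 z with h | h
    · rw [if_pos h, h]
    · rw [if_neg h]
      have hval : (p.1 : ℕ) ≠ 0 := by
        intro hc
        exact h (Fin.ext hc)
      rw [hN0row q.2 p.1 hval q.1, mul_zero]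
  have hBAeq : B * A = Matrix.diagonal R0 * Dbar := by
    ext j j'
    rw [Matrix.mul_apply, Fintype.sum_prod_type, Matrix.diagonal_mul]
    have h1 : ∀ (l : Fin m) (t : Fin n), B j (l, t) * A (l, t) j' =
        if t = j then (if l = z then R0 j * d z j j' else 0) else 0 := by
      intro l t
      show (if t = j then N0 j z l else 0) * (if l = z then d z t j' else 0) = _
      by_cases h1 : t = j
      · by_cases h2 : l = z
        · subst h1; subst h2; simp [hR0, hN0]
        · simp [h1, h2]
      · simp [h1]
    rw [Finset.sum_comm]
    rw [Finset.sum_congr rfl fun t _ => Finset.sum_congr rfl fun l _ => h1 l t]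
    simp [hDbar_apply]
  -- spectrum union
  set K : Matrix (Fin n) (Fin n) ℝ := Matrix.diagonal R0 * Dbar with hK
  have hzeroN : (0 : ℂ) ∈ spectrum ℂ (aCmap (nextGen m n f sd ss d)) := by
    rw [spectrum.mem_iff]
    intro hUnit
    rw [map_zero, zero_sub, Matrix.isUnit_iff_isUnit_det, Matrix.det_neg] at hUnit
    have hdet : (aCmap (nextGen m n f sd ss d)).det = 0 := by
      refine Matrix.det_eq_zero_of_row_eq_zero ((⟨1, hm1⟩ : Fin m), Classical.arbitrary (Fin n))
        fun q => ?_
      have h1 : nextGen m n f sd ss d ((⟨1, hm1⟩ : Fin m), Classical.arbitrary (Fin n)) q = 0 := by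
        rw [hNentry]
        have : ((⟨1, hm1⟩ : Fin m) : ℕ) ≠ 0 := by simp
        rw [hN0row _ _ this, mul_zero]
      simp [aCmap, h1]
    rw [hdet, mul_zero] at hUnit
    exact (not_isUnit_zero : ¬ IsUnit (0 : ℂ)) hUnit
  have hUnion : spectrum ℂ (aCmap (nextGen m n f sd ss d)) = spectrum ℂ (aCmap K) ∪ {0} := by
    ext μ
    constructor
    · intro hμ
      rcases eq_or_ne μ 0 with rfl | h0
      · exact Set.mem_union_right _ rfl
      · left
        rw [hABeq, aCmap_mul] at hμ
        have h2 := spec_swap_aux (aCmap A) (aCmap B) h0 hμ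
        rwa [← aCmap_mul, hBAeq] at h2
    · intro hμ
      rcases eq_or_ne μ 0 with rfl | h0
      · exact hzeroN
      · rcases hμ with hμ | hμ
        · rw [← hBAeq, aCmap_mul] at hμ
          have h2 := spec_swap_aux (aCmap B) (aCmap A) h0 hμ
          rwa [← aCmap_mul, ← hABeq] at h2
        · exact absurd (Set.mem_singleton_iff.mp hμ) h0
  have hspecEq : specRad (nextGen m n f sd ss d) = specRad K := specRad_eq_of_union hUnion
  -- bounds via transpose
  have hKT : specRad K = specRad Kᵀ := (specRad_transpose K).symm
  have hKT0 : ∀ j j', 0 ≤ Kᵀ j j' := by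
    intro j j'
    rw [Matrix.transpose_apply, hK, Matrix.diagonal_mul]
    exact mul_nonneg (hR0nn j') (hDbar_apply j' j ▸ hd0 z j' j)
  have hKTrow : ∀ j, ∑ j', Kᵀ j j' = ∑ j', R0 j' * d z j' j := by
    intro j
    refine Finset.sum_congr rfl fun j' _ => ?_
    rw [Matrix.transpose_apply, hK, Matrix.diagonal_mul, hDbar_apply]
  have hrow_lb : ∀ j, α ≤ ∑ j', Kᵀ j j' := by
    intro j
    rw [hKTrow]
    calc α = α * ∑ j', d z j' j := by rw [hdsum z j, mul_one]
      _ = ∑ j', α * d z j' j := Finset.mul_sum _ _ _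
      _ ≤ ∑ j', R0 j' * d z j' j :=
        Finset.sum_le_sum fun j' _ => mul_le_mul_of_nonneg_right (hαle j') (hd0 z j' j)
  have hrow_ub : ∀ j, ∑ j', Kᵀ j j' ≤ β := by
    intro j
    rw [hKTrow]
    calc ∑ j', R0 j' * d z j' j ≤ ∑ j', β * d z j' j :=
        Finset.sum_le_sum fun j' _ => mul_le_mul_of_nonneg_right (hβge j') (hd0 z j' j)
      _ = β * ∑ j', d z j' j := (Finset.mul_sum _ _ _).symm
      _ = β := by rw [hdsum z j, mul_one]
  refine ⟨?_, ?_, part3⟩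
  · rw [hspecEq, hKT]
    exact le_specRad_of_rowsum hα0 hKT0 hrow_lb
  · rw [hspecEq, hKT]
    exact specRad_le_of_rowsum hβ0 hKT0 hrow_ub
end SpecHelpers
end
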